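/- Let n ≥ 1 and s ∈ ℕ ∪ {0}. There exists a constant C ≥ 1 such that for every ball B = B(c_B, r_B) ⊂ ℝ^n with r_B < 1 and |c_B| < 1/r_B, one has C^{-1}‖χ_B‖_{L^{φ_0}} ≤ ‖χ_B‖_{L^{Φ_1}} ≤ C‖χ_B‖_{L^{φ_0}}; consequently, if a is a (Φ_1,∞,s)-atom associated with such a ball B, then C^{-1}a is a (φ_0,∞,s)-atom associated with the same ball B. -/

import Mathlib

open MeasureTheory Real
open scoped ENNReal Classical

noncomputable section

/-- `ℝⁿ` as a Euclidean space. -/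
abbrev Rn (n : ℕ) := EuclideanSpace ℝ (Fin n)

/-- The Musielak-Orlicz growth function `Φ_p`. -/
def Phi (n : ℕ) (p : ℝ) (x : Rn n) (t : ℝ) : ℝ :=
  if ∃ k : ℕ, (n : ℝ) * (1 / p - 1) = (k : ℝ) then
    t / (Real.log (Real.exp 1 + t) +
      (t * (1 + ‖x‖) ^ (n : ℝ)) ^ (1 - p) * (Real.log (Real.exp 1 + ‖x‖)) ^ p)
  else
    t / (Real.log (Real.exp 1 + t) + (t * (1 + ‖x‖) ^ (n : ℝ)) ^ (1 - p))

/-- The Orlicz function `φ₀(t) = t / log(e+t)`. -/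
def phi0 (t : ℝ) : ℝ := t / Real.log (Real.exp 1 + t)

/-- The weight `W_p`. -/
def Wp (n : ℕ) (p : ℝ) (x : Rn n) : ℝ :=
  if p = 1 then 1 / Real.log (Real.exp 1 + ‖x‖)
  else if ∃ k : ℕ, (n : ℝ) * (1 / p - 1) = (k : ℝ) then
    (1 + ‖x‖) ^ (-(n : ℝ) * (1 - p)) * (Real.log (Real.exp 1 + ‖x‖)) ^ (-p)
  else (1 + ‖x‖) ^ (-(n : ℝ) * (1 - p))

/-- Extension of `Φ_p(x, ·)` to `ℝ≥0∞`. -/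
def PhiE (n : ℕ) (p : ℝ) (x : Rn n) (t : ℝ≥0∞) : ℝ≥0∞ :=
  if t = ⊤ then ⊤ else ENNReal.ofReal (Phi n p x t.toReal)

/-- Extension of `φ₀` to `ℝ≥0∞`. -/
def phi0E (t : ℝ≥0∞) : ℝ≥0∞ :=
  if t = ⊤ then ⊤ else ENNReal.ofReal (phi0 t.toReal)

/-- The Luxemburg quasi-norm `‖·‖_{L^{Φ_p}}`. -/
def luxPhiNorm (n : ℕ) (p : ℝ) (F : Rn n → ℝ≥0∞) : ℝ≥0∞ :=
  sInf {lam : ℝ≥0∞ | 0 < lam ∧ (∫⁻ x : Rn n, PhiE n p x (F x / lam)) ≤ 1}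

/-- The Luxemburg norm `‖·‖_{L^{φ₀}}`. -/
def luxPhi0Norm (n : ℕ) (F : Rn n → ℝ≥0∞) : ℝ≥0∞ :=
  sInf {lam : ℝ≥0∞ | 0 < lam ∧ (∫⁻ x : Rn n, phi0E (F x / lam)) ≤ 1}

/-- The weighted quasi-norm `‖·‖_{L^p_{W_p}}`. -/
def wNorm (n : ℕ) (p : ℝ) (F : Rn n → ℝ≥0∞) : ℝ≥0∞ :=
  (∫⁻ x : Rn n, F x ^ p * ENNReal.ofReal (Wp n p x)) ^ (1 / p)

/-- The weighted norm `‖·‖_{L^1_{W_1}}`. -/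
def w1Norm (n : ℕ) (F : Rn n → ℝ≥0∞) : ℝ≥0∞ :=
  ∫⁻ x : Rn n, F x * ENNReal.ofReal (Wp n 1 x)

/-- The characteristic function of a set, `ℝ≥0∞`-valued. -/
def chi (n : ℕ) (B : Set (Rn n)) : Rn n → ℝ≥0∞ := B.indicator fun _ => 1


/-- An `(X, ∞, s)`-atom associated with the set `B`, where `normB` is `‖χ_B‖_X`:
a measurable function supported in `B`, bounded by `‖χ_B‖_X⁻¹`, with vanishing
moments up to order `s`. -/
def IsAtom' (n s : ℕ) (normB : ℝ≥0∞) (B : Set (Rn n)) (a : Rn n → ℂ) : Prop :=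
  Measurable a ∧ (∀ x, x ∉ B → a x = 0) ∧
  (∀ᵐ x : Rn n, (‖a x‖₊ : ℝ≥0∞) ≤ normB⁻¹) ∧
  ∀ α : Fin n → ℕ, (∑ i, α i) ≤ s →
    (∫ x : Rn n, a x * ∏ i, ((x i : ℝ) : ℂ) ^ (α i)) = 0

/- ### Auxiliary lemmas -/

lemma one_le_logE {t : ℝ} (ht : 0 ≤ t) : 1 ≤ Real.log (Real.exp 1 + t) := by
  calc (1:ℝ) = Real.log (Real.exp 1) := (Real.log_exp 1).symm
    _ ≤ _ := Real.log_le_log (Real.exp_pos 1) (by linarith)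

lemma Phi_one (n : ℕ) (x : Rn n) (t : ℝ) :
    Phi n 1 x t = t / (Real.log (Real.exp 1 + t) + Real.log (Real.exp 1 + ‖x‖)) := by
  have h : ∃ k : ℕ, (n : ℝ) * (1 / 1 - 1) = (k : ℝ) := ⟨0, by norm_num⟩
  rw [Phi, if_pos h]
  norm_num

lemma PhiE_one_le_phi0E (n : ℕ) (x : Rn n) (t : ℝ≥0∞) : PhiE n 1 x t ≤ phi0E t := by
  by_cases ht : t = ⊤
  · simp [PhiE, phi0E, ht]
  · rw [PhiE, phi0E, if_neg ht, if_neg ht]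
    apply ENNReal.ofReal_le_ofReal
    rw [Phi_one, phi0]
    have h1 : (0:ℝ) ≤ t.toReal := ENNReal.toReal_nonneg
    have h2 : (0:ℝ) < Real.log (Real.exp 1 + t.toReal) :=
      lt_of_lt_of_le one_pos (one_le_logE h1)
    have h3 : (1:ℝ) ≤ Real.log (Real.exp 1 + ‖x‖) := one_le_logE (norm_nonneg x)
    gcongr
    linarith

lemma luxPhi_le_luxPhi0 (n : ℕ) (F : Rn n → ℝ≥0∞) : luxPhiNorm n 1 F ≤ luxPhi0Norm n F := by
  apply sInf_le_sInf
  rintro lam ⟨h1, h2⟩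
  exact ⟨h1, le_trans (lintegral_mono fun x => PhiE_one_le_phi0E n x _) h2⟩

/-- The constant in the comparison. -/
def Cconst (n : ℕ) : ℝ :=
  2 * Real.log (Real.exp 1 + 2) +
    2 * |Real.log ((volume (Metric.ball (0 : Rn n) 1)).toReal)| + 4

lemma Cconst_ge (n : ℕ) : 4 ≤ Cconst n := by
  have h1 : 0 ≤ Real.log (Real.exp 1 + 2) :=
    Real.log_nonneg (by nlinarith [Real.exp_pos 1])
  have h2 : 0 ≤ |Real.log ((volume (Metric.ball (0 : Rn n) 1)).toReal)| := abs_nonneg _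
  unfold Cconst; linarith

lemma log_le_half {C : ℝ} (hC : 1 ≤ C) : Real.log C ≤ C / 2 := by
  have hCpos : (0:ℝ) < C := by linarith
  have h1 : Real.log (Real.sqrt C) = Real.log C / 2 := Real.log_sqrt hCpos.le
  have h2 : Real.log (Real.sqrt C) ≤ Real.sqrt C - 1 :=
    Real.log_le_sub_one_of_pos (Real.sqrt_pos.2 hCpos)
  have h3 : Real.sqrt C ^ 2 = C := Real.sq_sqrt hCpos.le
  nlinarith [sq_nonneg (Real.sqrt C - 2)]

set_option maxHeartbeats 2000000 in
lemma key_lam (n : ℕ) (hn : 1 ≤ n) (c : Rn n) (r : ℝ) (hr0 : 0 < r) (hr1 : r < 1)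
    (hc : ‖c‖ < 1 / r) (lam : ℝ≥0∞) (hlam : 0 < lam)
    (h : (∫⁻ x : Rn n, PhiE n 1 x (chi n (Metric.ball c r) x / lam)) ≤ 1) :
    (∫⁻ x : Rn n,
      phi0E (chi n (Metric.ball c r) x / (ENNReal.ofReal (Cconst n) * lam))) ≤ 1 := by
  haveI : Nonempty (Fin n) := ⟨⟨0, hn⟩⟩
  set C := Cconst n with hCdef
  have hC4 : (4:ℝ) ≤ C := Cconst_ge n
  have hCpos : (0:ℝ) < C := by linarith
  have hcE0 : ENNReal.ofReal C ≠ 0 := (ENNReal.ofReal_pos.2 hCpos).ne'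
  rcases eq_or_ne lam ⊤ with htop | hfin
  · subst htop
    simp [ENNReal.mul_top hcE0, ENNReal.div_top, phi0E, phi0]
  have hlam0 : lam ≠ 0 := hlam.ne'
  have hlamR : 0 < lam.toReal := ENNReal.toReal_pos hlam0 hfin
  set u : ℝ := lam.toReal⁻¹ with hu
  have hu0 : 0 < u := inv_pos.2 hlamR
  clear_value u
  set B := Metric.ball c r with hB
  clear_value B
  have hBmeas : MeasurableSet B := hB ▸ measurableSet_ball
  have hμB0 : volume B ≠ 0 := by rw [hB]; exact (Metric.measure_ball_pos _ _ hr0).ne'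
  have hμBt : volume B ≠ ⊤ := by rw [hB]; exact measure_ball_lt_top.ne
  set V : ℝ := (volume B).toReal with hV
  have hV0 : 0 < V := ENNReal.toReal_pos hμB0 hμBt
  clear_value V
  set v : ℝ := (volume (Metric.ball (0 : Rn n) 1)).toReal with hv
  have hv0 : 0 < v :=
    ENNReal.toReal_pos (Metric.measure_ball_pos _ _ one_pos).ne' measure_ball_lt_top.ne
  clear_value v
  have hVrn : V = r ^ n * v := by
    have h1 : volume B = ENNReal.ofReal (r ^ n) * volume (Metric.ball (0 : Rn n) 1) := by
      rw [hB, Measure.addHaar_ball _ _ hr0.le, finrank_euclideanSpace_fin]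
    rw [hV, h1, ENNReal.toReal_mul, ENNReal.toReal_ofReal (by positivity), hv]
  set D : ℝ := Real.log (Real.exp 1 + u) + Real.log (Real.exp 1 + (1 / r + 1)) with hD
  have hlogu : (1:ℝ) ≤ Real.log (Real.exp 1 + u) := one_le_logE hu0.le
  have hlogr1 : (1:ℝ) ≤ Real.log (Real.exp 1 + (1 / r + 1)) := one_le_logE (by positivity)
  have hD0 : 0 < D := by rw [hD]; linarith
  clear_value D
  -- extract the hypothesis: V * u ≤ D
  have hVu : V * u ≤ D := by
    have hpt : ∀ x : Rn n, B.indicator (fun _ => ENNReal.ofReal (u / D)) x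
        ≤ PhiE n 1 x (chi n B x / lam) := by
      intro x
      by_cases hx : x ∈ B
      · rw [Set.indicator_of_mem hx]
        have hchi : chi n B x = 1 := by simp [chi, Set.indicator_of_mem hx]
        rw [hchi]
        have hne : (1:ℝ≥0∞) / lam ≠ ⊤ := by
          simp [ENNReal.div_eq_top, hlam0, hfin]
        rw [PhiE, if_neg hne]
        have htr : ((1:ℝ≥0∞) / lam).toReal = u := by
          rw [one_div, ENNReal.toReal_inv, ← hu]
        rw [htr, Phi_one]
        apply ENNReal.ofReal_le_ofReal
        have hx1 : ‖x‖ ≤ 1 / r + 1 := by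
          have hxc : dist x c < r := Metric.mem_ball.1 (hB ▸ hx)
          have h5 : ‖x‖ ≤ ‖x - c‖ + ‖c‖ := by
            simpa using norm_add_le (x - c) c
          rw [dist_eq_norm] at hxc
          linarith
        have hlogx : Real.log (Real.exp 1 + ‖x‖) ≤ Real.log (Real.exp 1 + (1 / r + 1)) :=
          Real.log_le_log (by positivity) (by linarith)
        have hden : 0 < Real.log (Real.exp 1 + u) + Real.log (Real.exp 1 + ‖x‖) := by
          have := one_le_logE (norm_nonneg x); linarith
        gcongr
        rw [hD]; linarith
      · rw [Set.indicator_of_notMem hx]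
        exact zero_le
    have h1 : ENNReal.ofReal (u / D) * volume B ≤ 1 := by
      calc ENNReal.ofReal (u / D) * volume B
          = ∫⁻ x : Rn n, B.indicator (fun _ => ENNReal.ofReal (u / D)) x := by
            rw [lintegral_indicator hBmeas, setLIntegral_const]
        _ ≤ ∫⁻ x : Rn n, PhiE n 1 x (chi n B x / lam) := lintegral_mono hpt
        _ ≤ 1 := h
    have h2 := ENNReal.toReal_mono ENNReal.one_ne_top h1
    rw [ENNReal.toReal_mul, ENNReal.toReal_ofReal (div_nonneg hu0.le hD0.le),
      ENNReal.toReal_one, ← hV] at h2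
    rw [div_mul_eq_mul_div, div_le_one hD0] at h2
    linarith
  -- compute the target integral
  have hmul0 : ENNReal.ofReal C * lam ≠ 0 := by
    simp [hcE0, hlam0]
  have hmult : ENNReal.ofReal C * lam ≠ ⊤ := ENNReal.mul_ne_top ENNReal.ofReal_ne_top hfin
  have htr2 : ((1:ℝ≥0∞) / (ENNReal.ofReal C * lam)).toReal = u / C := by
    rw [one_div, ENNReal.toReal_inv, ENNReal.toReal_mul, ENNReal.toReal_ofReal hCpos.le,
      mul_inv, hu]
    ring
  have heq : (fun x : Rn n => phi0E (chi n B x / (ENNReal.ofReal C * lam)))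
      = B.indicator (fun _ => ENNReal.ofReal (phi0 (u / C))) := by
    funext x
    by_cases hx : x ∈ B
    · rw [Set.indicator_of_mem hx]
      have hchi : chi n B x = 1 := by simp [chi, Set.indicator_of_mem hx]
      have hne2 : (1:ℝ≥0∞) / (ENNReal.ofReal C * lam) ≠ ⊤ := by
        simp [ENNReal.div_eq_top, hmul0, hmult]
      rw [hchi, phi0E, if_neg hne2, htr2]
    · rw [Set.indicator_of_notMem hx]
      have hchi : chi n B x = 0 := by simp [chi, Set.indicator_of_notMem hx]
      rw [hchi, ENNReal.zero_div]
      simp [phi0E, phi0]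
  have hint : (∫⁻ x : Rn n, phi0E (chi n B x / (ENNReal.ofReal C * lam)))
      = ENNReal.ofReal (phi0 (u / C)) * volume B := by
    rw [heq, lintegral_indicator hBmeas, setLIntegral_const]
  rw [hint]
  -- the real inequality
  set L : ℝ := Real.log (Real.exp 1 + u / C) with hL
  have hL1 : (1:ℝ) ≤ L := one_le_logE (div_nonneg hu0.le hCpos.le)
  clear_value L
  have hkey : V * u ≤ C * L := by
    by_cases hcase : V * u ≤ C
    · nlinarith
    · push_neg at hcase
      have huC : 1 / V < u / C := by
        rw [div_lt_div_iff₀ hV0 hCpos]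
        nlinarith
      have hnegV : -Real.log V < L := by
        have h1 : Real.log (1 / V) < Real.log (u / C) :=
          Real.log_lt_log (one_div_pos.2 hV0) huC
        have h2 : Real.log (u / C) ≤ L := by
          rw [hL]
          have : u / C ≤ Real.exp 1 + u / C := by linarith [Real.exp_pos 1]
          exact Real.log_le_log (div_pos hu0 hCpos) this
        rw [one_div, Real.log_inv] at h1
        linarith
      have hA : Real.log (Real.exp 1 + u) ≤ Real.log C + L := by
        have hEuC : 0 < Real.exp 1 + u / C := by
          have := div_pos hu0 hCpos; linarith [Real.exp_pos 1]
        have h1 : Real.exp 1 + u ≤ C * (Real.exp 1 + u / C) := by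
          have h0 : u / C * C = u := div_mul_cancel₀ u hCpos.ne'
          nlinarith [Real.exp_pos 1]
        calc Real.log (Real.exp 1 + u) ≤ Real.log (C * (Real.exp 1 + u / C)) :=
            Real.log_le_log (by linarith [Real.exp_pos 1]) h1
          _ = Real.log C + L := by
            rw [Real.log_mul hCpos.ne' hEuC.ne', hL]
      have hBnd : Real.log (Real.exp 1 + (1 / r + 1))
          ≤ Real.log (Real.exp 1 + 2) + (Real.log v + L) := by
        have h1 : Real.exp 1 + (1 / r + 1) ≤ (Real.exp 1 + 2) / r := by
          rw [le_div_iff₀ hr0]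
          have h1r : r * (1/r) = 1 := by field_simp
          nlinarith [Real.exp_pos 1]
        have h2 : Real.log (Real.exp 1 + (1 / r + 1))
            ≤ Real.log (Real.exp 1 + 2) - Real.log r := by
          calc Real.log (Real.exp 1 + (1 / r + 1)) ≤ Real.log ((Real.exp 1 + 2) / r) :=
              Real.log_le_log (by positivity) h1
            _ = _ := Real.log_div (by positivity) hr0.ne'
        have hlogr : Real.log r < 0 := Real.log_neg hr0 hr1
        have h3 : -Real.log r ≤ (n:ℝ) * (-Real.log r) := by
          have hn1 : (1:ℝ) ≤ (n:ℝ) := by exact_mod_cast hn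
          nlinarith
        have h4 : Real.log V = (n:ℝ) * Real.log r + Real.log v := by
          rw [hVrn, Real.log_mul (pow_ne_zero n hr0.ne') hv0.ne', Real.log_pow]
        linarith
      have hlogC : Real.log C ≤ C / 2 := log_le_half (by linarith)
      have hChalf : Real.log (Real.exp 1 + 2) + |Real.log v| + 2 ≤ C / 2 := by
        have hCeq : C = 2 * Real.log (Real.exp 1 + 2) + 2 * |Real.log v| + 4 := by
          rw [hCdef]; unfold Cconst; rw [← hv]
        rw [hCeq]; linarith
      have hlogv : Real.log v ≤ |Real.log v| := le_abs_self _
      have hfac : 0 ≤ (C - 2) * (L - 1) := mul_nonneg (by linarith) (by linarith)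
      have hCL : D ≤ C * L := by
        rw [hD]; nlinarith
      linarith
  have hphi0nn : 0 ≤ phi0 (u / C) := by
    rw [phi0, ← hL]
    exact div_nonneg (div_nonneg hu0.le hCpos.le) (by linarith)
  have hgoal : phi0 (u / C) * V ≤ 1 := by
    rw [phi0, ← hL, div_div, div_mul_eq_mul_div,
      div_le_one (mul_pos hCpos (lt_of_lt_of_le one_pos hL1))]
    nlinarith
  calc ENNReal.ofReal (phi0 (u / C)) * volume B
      = ENNReal.ofReal (phi0 (u / C)) * ENNReal.ofReal V := by
        rw [hV, ENNReal.ofReal_toReal hμBt]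
    _ = ENNReal.ofReal (phi0 (u / C) * V) := (ENNReal.ofReal_mul hphi0nn).symm
    _ ≤ 1 := by
        rw [← ENNReal.ofReal_one]
        exact ENNReal.ofReal_le_ofReal hgoal

/-- For balls with `r_B < 1` and `|c_B| < 1/r_B`, `‖χ_B‖_{L^{Φ_1}} ∼ ‖χ_B‖_{L^{φ₀}}`;
consequently every `(Φ_1,∞,s)`-atom on such a ball is, up to a uniform constant,
a `(φ₀,∞,s)`-atom. -/
theorem statement11 (n s : ℕ) (hn : 1 ≤ n) :
    ∃ C : ℝ, 1 ≤ C ∧ ∀ (c : Rn n) (r : ℝ), 0 < r → r < 1 → ‖c‖ < 1 / r →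
      (ENNReal.ofReal C⁻¹ * luxPhi0Norm n (chi n (Metric.ball c r)) ≤
          luxPhiNorm n 1 (chi n (Metric.ball c r)) ∧
        luxPhiNorm n 1 (chi n (Metric.ball c r)) ≤
          ENNReal.ofReal C * luxPhi0Norm n (chi n (Metric.ball c r))) ∧
      ∀ a : Rn n → ℂ,
        IsAtom' n s (luxPhiNorm n 1 (chi n (Metric.ball c r))) (Metric.ball c r) a →
        IsAtom' n s (luxPhi0Norm n (chi n (Metric.ball c r))) (Metric.ball c r)
          (fun x => (C : ℂ)⁻¹ * a x) := by
  have hC4 : (4:ℝ) ≤ Cconst n := Cconst_ge n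
  have hCpos : (0:ℝ) < Cconst n := by linarith
  have hcE0 : ENNReal.ofReal (Cconst n) ≠ 0 := (ENNReal.ofReal_pos.2 hCpos).ne'
  have hcEt : ENNReal.ofReal (Cconst n) ≠ ⊤ := ENNReal.ofReal_ne_top
  refine ⟨Cconst n, by linarith, ?_⟩
  intro c r hr0 hr1 hc
  set B := Metric.ball c r with hB
  have hupper : luxPhiNorm n 1 (chi n B) ≤ luxPhi0Norm n (chi n B) :=
    luxPhi_le_luxPhi0 n (chi n B)
  have hlower : luxPhi0Norm n (chi n B) ≤ ENNReal.ofReal (Cconst n) * luxPhiNorm n 1 (chi n B) := by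
    rw [mul_comm, ← ENNReal.div_le_iff_le_mul (Or.inl hcE0) (Or.inl hcEt)]
    rw [luxPhiNorm]
    apply le_sInf
    rintro lam ⟨h1, h2⟩
    rw [ENNReal.div_le_iff_le_mul (Or.inl hcE0) (Or.inl hcEt), mul_comm]
    have hmem : ENNReal.ofReal (Cconst n) * lam ∈
        {lam : ℝ≥0∞ | 0 < lam ∧ (∫⁻ x : Rn n, phi0E (chi n B x / lam)) ≤ 1} :=
      ⟨ENNReal.mul_pos hcE0 h1.ne', key_lam n hn c r hr0 hr1 hc lam h1 h2⟩
    rw [luxPhi0Norm]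
    exact sInf_le hmem
  constructor
  · constructor
    · calc ENNReal.ofReal (Cconst n)⁻¹ * luxPhi0Norm n (chi n B)
          ≤ ENNReal.ofReal (Cconst n)⁻¹ *
            (ENNReal.ofReal (Cconst n) * luxPhiNorm n 1 (chi n B)) :=
            by gcongr
        _ = (ENNReal.ofReal (Cconst n)⁻¹ * ENNReal.ofReal (Cconst n)) *
            luxPhiNorm n 1 (chi n B) := by rw [mul_assoc]
        _ = 1 * luxPhiNorm n 1 (chi n B) := by
            rw [← ENNReal.ofReal_mul (by positivity), inv_mul_cancel₀ hCpos.ne',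
              ENNReal.ofReal_one]
        _ = luxPhiNorm n 1 (chi n B) := one_mul _
    · calc luxPhiNorm n 1 (chi n B) ≤ luxPhi0Norm n (chi n B) := hupper
        _ ≤ ENNReal.ofReal (Cconst n) * luxPhi0Norm n (chi n B) :=
          le_mul_of_one_le_left (by simp) (ENNReal.one_le_ofReal.2 (by linarith))
  · rintro a ⟨hmeas, hsupp, hbound, hmom⟩
    refine ⟨hmeas.const_mul _, ?_, ?_, ?_⟩
    · intro x hx
      simp [hsupp x hx]
    · filter_upwards [hbound] with x hx
      have hnorm : (‖((Cconst n : ℂ))⁻¹ * a x‖₊ : ℝ≥0∞)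
          = ENNReal.ofReal (Cconst n)⁻¹ * (‖a x‖₊ : ℝ≥0∞) := by
        have h5 : ‖((Cconst n : ℂ))⁻¹‖ = (Cconst n)⁻¹ := by
          rw [norm_inv, Complex.norm_real, Real.norm_eq_abs, abs_of_pos hCpos]
        rw [nnnorm_mul, ENNReal.coe_mul, ← h5, ofReal_norm]; rfl
      rw [hnorm]
      calc ENNReal.ofReal (Cconst n)⁻¹ * (‖a x‖₊ : ℝ≥0∞)
          ≤ ENNReal.ofReal (Cconst n)⁻¹ * (luxPhiNorm n 1 (chi n B))⁻¹ :=
            by gcongr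
        _ = (ENNReal.ofReal (Cconst n))⁻¹ * (luxPhiNorm n 1 (chi n B))⁻¹ := by
            rw [ENNReal.ofReal_inv_of_pos hCpos]
        _ = (ENNReal.ofReal (Cconst n) * luxPhiNorm n 1 (chi n B))⁻¹ :=
            (ENNReal.mul_inv (Or.inl hcE0) (Or.inl hcEt)).symm
        _ ≤ (luxPhi0Norm n (chi n B))⁻¹ := ENNReal.inv_le_inv.2 hlower
    · intro α hα
      have h6 := hmom α hα
      simp only [mul_assoc]
      rw [MeasureTheory.integral_const_mul, h6, mul_zero]
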